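/- There exists an instance of two agents with additive scaled utilities over indivisible goods in which every EF1 allocation has social welfare at most 7/8 of the optimal social welfare; hence the price of EF1 for two agents with scaled utilities is at least 8/7 (as a supremum over instances, with instances approaching the bound). -/
import Mathlib

open Finset

/-- EF1 for two agents. -/
def EF1 {G : Type*} [DecidableEq G] (u1 u2 : G → ℝ) (A1 A2 : Finset G) : Prop :=
  (A2 = ∅ ∨ ∃ g ∈ A2, ∑ x ∈ A2.erase g, u1 x ≤ ∑ x ∈ A1, u1 x) ∧
  (A1 = ∅ ∨ ∃ g ∈ A1, ∑ x ∈ A1.erase g, u2 x ≤ ∑ x ∈ A2, u2 x)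

set_option maxHeartbeats 4000000 in
/-- There are two-agent scaled instances of indivisible-goods allocation in
which every EF1 allocation has social welfare arbitrarily close to (at most) `7/8` of the
optimal social welfare; hence the price of EF1 for two agents with scaled utilities is at
least `8/7`. -/
theorem stmt_4 :
    ∀ ε : ℝ, 0 < ε →
      ∃ (n : ℕ) (M : Finset (Fin n)) (u1 u2 : Fin n → ℝ),
        (∀ g ∈ M, 0 ≤ u1 g) ∧ (∀ g ∈ M, 0 ≤ u2 g) ∧
        (∑ g ∈ M, u1 g = 1) ∧ (∑ g ∈ M, u2 g = 1) ∧
        ∃ B1 B2 : Finset (Fin n), Disjoint B1 B2 ∧ B1 ∪ B2 = M ∧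
          ∀ A1 A2 : Finset (Fin n), Disjoint A1 A2 → A1 ∪ A2 = M → EF1 u1 u2 A1 A2 →
            ∑ g ∈ A1, u1 g + ∑ g ∈ A2, u2 g ≤
              (7 / 8 + ε) * (∑ g ∈ B1, u1 g + ∑ g ∈ B2, u2 g) := by
  intro ε hε
  obtain ⟨δ, hδpos, hδε, hδle⟩ : ∃ δ : ℝ, 0 < δ ∧ δ ≤ ε ∧ δ ≤ 1/12 :=
    ⟨min ε (1/12), lt_min hε (by norm_num), min_le_left _ _, min_le_right _ _⟩
  refine ⟨4, Finset.univ, ![1/2,1/2,0,0], ![1/3+δ,1/3+δ,1/6-δ,1/6-δ], ?_, ?_, ?_, ?_,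
    {0,1}, {2,3}, by decide, by decide, ?_⟩
  · intro g _; fin_cases g <;> norm_num
  · intro g _; fin_cases g <;> simp <;> linarith
  · simp [Fin.sum_univ_four]; norm_num
  · simp [Fin.sum_univ_four]; ring
  · intro A1 A2 hdisj hunion hEF1
    have hA2 : A2 = Finset.univ \ A1 := by
      rw [← hunion, Finset.union_sdiff_cancel_left hdisj]
    subst hA2
    have hmem : A1 ∈ (Finset.univ : Finset (Fin 4)).powerset :=
      Finset.mem_powerset.mpr (Finset.subset_univ _)
    obtain ⟨-, h2⟩ := hEF1
    fin_cases hmem <;>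
      rcases h2 with h2 | ⟨g, hg, h2⟩ <;>
      (try fin_cases g) <;>
      simp_all [Finset.sum_sdiff_eq_sub (Finset.subset_univ _), Fin.sum_univ_four,
        Finset.sum_erase_eq_sub, Finset.sum_insert, Finset.mem_insert] <;>
      nlinarith [mul_nonneg hε.le (show (0:ℝ) ≤ 1/6 - 2*δ by linarith)]
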